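/- Under consistency, ignorability, positivity and the treatment-conditional measurement error model, for every t ∈ {0,1}, every loss ℓ : [0,1] × {0,1} → ℝ and every predictor f : 𝒳 → [0,1], the re-weighted surrogate risk over observed proxies equals the risk over target potential outcomes: E[w(X)·ℓ̃(f(X), Y) | T = t] = E[ℓ(f(X), Y*_t)]. -/

import Mathlib

open scoped Classical
open Finset

/-- Probability of an event under a probability mass function `P` on a finite sample space. -/
noncomputable def pr {Ω : Type*} [Fintype Ω] (P : Ω → ℝ) (A : Set Ω) : ℝ :=
  ∑ ω : Ω, if ω ∈ A then P ω else 0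

/-- Conditional probability `P(A | B) = P(A ∩ B) / P(B)`. -/
noncomputable def cpr {Ω : Type*} [Fintype Ω] (P : Ω → ℝ) (A B : Set Ω) : ℝ :=
  pr P (A ∩ B) / pr P B

/-- Expectation of a real random variable. -/
noncomputable def ex {Ω : Type*} [Fintype Ω] (P : Ω → ℝ) (Z : Ω → ℝ) : ℝ :=
  ∑ ω : Ω, P ω * Z ω

/-- Conditional expectation `E[Z | B]`. -/
noncomputable def cex {Ω : Type*} [Fintype Ω] (P : Ω → ℝ) (Z : Ω → ℝ) (B : Set Ω) : ℝ :=
  (∑ ω : Ω, if ω ∈ B then P ω * Z ω else 0) / pr P B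

/-- The surrogate loss `ℓ̃` built from loss `ℓ` and error parameters `α` (FPR) and `β` (FNR). -/
noncomputable def surrogateLoss (α β : ℝ) (ℓ : Set.Icc (0:ℝ) 1 → Fin 2 → ℝ)
    (z : Set.Icc (0:ℝ) 1) (y : Fin 2) : ℝ :=
  if y = 1 then ((1 - α) * ℓ z 1 - β * ℓ z 0) / (1 - β - α)
  else ((1 - β) * ℓ z 0 - α * ℓ z 1) / (1 - β - α)

lemma fin2_cases (v : Fin 2) : v = 0 ∨ v = 1 := by omega

section
variable {Ω : Type*} [Fintype Ω] (P : Ω → ℝ)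

lemma pr_congr (A B : Set Ω) (h : ∀ ω, ω ∈ A ↔ ω ∈ B) : pr P A = pr P B := by
  unfold pr; exact Finset.sum_congr rfl fun ω _ => by simp [h ω]

lemma pr_nonneg (hP0 : ∀ ω, 0 ≤ P ω) (A : Set Ω) : 0 ≤ pr P A := by
  unfold pr; exact Finset.sum_nonneg fun ω _ => by by_cases h : ω ∈ A <;> simp [h, hP0 ω]

lemma pr_mono (hP0 : ∀ ω, 0 ≤ P ω) {A B : Set Ω} (h : ∀ ω, ω ∈ A → ω ∈ B) :
    pr P A ≤ pr P B := by
  unfold pr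
  refine Finset.sum_le_sum fun ω _ => ?_
  by_cases hA : ω ∈ A
  · simp [hA, h ω hA]
  · by_cases hB : ω ∈ B <;> simp [hA, hB, hP0 ω]

lemma pr_split (V : Ω → Fin 2) (A : Ω → Prop) :
    pr P {ω | A ω} = pr P {ω | V ω = 0 ∧ A ω} + pr P {ω | V ω = 1 ∧ A ω} := by
  unfold pr
  rw [← Finset.sum_add_distrib]
  refine Finset.sum_congr rfl fun ω _ => ?_
  by_cases hA : A ω
  · rcases fin2_cases (V ω) with h | h <;> simp [Set.mem_setOf_eq, hA, h]
  · simp [Set.mem_setOf_eq, hA]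

lemma sum_decomp (Q : Ω → Prop) [DecidablePred Q] (V : Ω → Fin 2) (g : Fin 2 → ℝ) :
    (∑ ω, if Q ω then P ω * g (V ω) else 0)
      = g 0 * pr P {ω | V ω = 0 ∧ Q ω} + g 1 * pr P {ω | V ω = 1 ∧ Q ω} := by
  unfold pr
  rw [Finset.mul_sum, Finset.mul_sum, ← Finset.sum_add_distrib]
  refine Finset.sum_congr rfl fun ω _ => ?_
  by_cases hQ : Q ω
  · rcases fin2_cases (V ω) with h | h <;> simp [Set.mem_setOf_eq, hQ, h, mul_comm]
  · simp [Set.mem_setOf_eq, hQ]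

lemma pr_eq_zero_imp (hP0 : ∀ ω, 0 ≤ P ω) {A : Set Ω} (h : pr P A = 0) :
    ∀ ω ∈ A, P ω = 0 := by
  intro ω hω
  have := (Finset.sum_eq_zero_iff_of_nonneg (fun i _ => by
      by_cases hi : i ∈ A <;> simp [hi, hP0 i])).mp h ω (Finset.mem_univ ω)
  simpa [hω] using this

lemma core {Ω 𝒳 : Type*} [Fintype Ω] [Fintype 𝒳]
    (P : Ω → ℝ) (hP0 : ∀ ω, 0 ≤ P ω) (hP1 : ∑ ω : Ω, P ω = 1)
    (X : Ω → 𝒳) (T : Ω → Fin 2) (τ : Fin 2) (S R : Ω → Fin 2)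
    (α β : ℝ) (hαβ : α + β < 1)
    (hig2 : ∀ x, 0 < pr P {ω | X ω = x} → ∀ u v : Fin 2,
      pr P {ω | S ω = u ∧ R ω = v ∧ X ω = x ∧ T ω = τ} * pr P {ω | X ω = x}
        = pr P {ω | S ω = u ∧ R ω = v ∧ X ω = x} * pr P {ω | T ω = τ ∧ X ω = x})
    (hme1 : ∀ x, 0 < pr P {ω | X ω = x} →
      pr P {ω | S ω = 0 ∧ R ω = 1 ∧ X ω = x} = α * pr P {ω | S ω = 0 ∧ X ω = x})
    (hme2 : ∀ x, 0 < pr P {ω | X ω = x} →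
      pr P {ω | S ω = 1 ∧ R ω = 0 ∧ X ω = x} = β * pr P {ω | S ω = 1 ∧ X ω = x})
    (hpos : ∀ x, 0 < pr P {ω | X ω = x} → 0 < pr P {ω | T ω = τ ∧ X ω = x})
    (ℓ : Set.Icc (0:ℝ) 1 → Fin 2 → ℝ) (f : 𝒳 → Set.Icc (0:ℝ) 1) (w : 𝒳 → ℝ)
    (hw : ∀ x, 0 < pr P {ω | X ω = x} →
      w x * pr P {ω | T ω = τ ∧ X ω = x} = pr P {ω | T ω = τ} * pr P {ω | X ω = x}) :
    cex P (fun ω => w (X ω) * surrogateLoss α β ℓ (f (X ω)) (R ω)) {ω | T ω = τ}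
      = ex P (fun ω => ℓ (f (X ω)) (S ω)) := by
  have hd : (1:ℝ) - β - α ≠ 0 := by linarith
  have hsum : ∑ x : 𝒳, pr P {ω | X ω = x} = 1 := by
    unfold pr
    rw [Finset.sum_comm, ← hP1]
    refine Finset.sum_congr rfl fun ω _ => ?_
    rw [show (∑ x : 𝒳, if ω ∈ {ω | X ω = x} then P ω else 0)
        = ∑ x : 𝒳, if X ω = x then P ω else 0 from rfl, Finset.sum_ite_eq]
    simp
  obtain ⟨x0, -, hx0⟩ : ∃ x ∈ Finset.univ, 0 < pr P {ω | X ω = x} := by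
    by_contra h
    push_neg at h
    have : ∑ x : 𝒳, pr P {ω | X ω = x} ≤ 0 :=
      Finset.sum_nonpos fun x hx => h x hx
    linarith [hsum]
  have hpT : 0 < pr P {ω | T ω = τ} :=
    lt_of_lt_of_le (hpos x0 hx0) (pr_mono P hP0 fun ω h => h.1)
  have keyx : ∀ x : 𝒳,
      (∑ ω, if X ω = x ∧ T ω = τ then P ω * (w x * surrogateLoss α β ℓ (f x) (R ω)) else 0)
        = pr P {ω | T ω = τ} * ∑ ω, if X ω = x then P ω * ℓ (f x) (S ω) else 0 := by
    intro x
    by_cases hx : 0 < pr P {ω | X ω = x}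
    · have hpxne : pr P {ω | X ω = x} ≠ 0 := ne_of_gt hx
      refine (sum_decomp P (fun ω => X ω = x ∧ T ω = τ) R
          (fun v => w x * surrogateLoss α β ℓ (f x) v)).trans ?_
      refine Eq.trans ?_ (congrArg (fun s => pr P {ω | T ω = τ} * s)
          (sum_decomp P (fun ω => X ω = x) S (fun v => ℓ (f x) v)).symm)
      beta_reduce
      have c0 := pr_split P S (fun ω => R ω = 0 ∧ X ω = x ∧ T ω = τ)
      have c1 := pr_split P S (fun ω => R ω = 1 ∧ X ω = x ∧ T ω = τ)
      have q0 := pr_split P R (fun ω => S ω = 0 ∧ X ω = x)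
      have q1 := pr_split P R (fun ω => S ω = 1 ∧ X ω = x)
      have g00 : pr P {ω | R ω = 0 ∧ S ω = 0 ∧ X ω = x}
          = pr P {ω | S ω = 0 ∧ R ω = 0 ∧ X ω = x} :=
        pr_congr P _ _ fun ω => by simp only [Set.mem_setOf_eq]; tauto
      have g01 : pr P {ω | R ω = 1 ∧ S ω = 0 ∧ X ω = x}
          = pr P {ω | S ω = 0 ∧ R ω = 1 ∧ X ω = x} :=
        pr_congr P _ _ fun ω => by simp only [Set.mem_setOf_eq]; tauto
      have g10 : pr P {ω | R ω = 0 ∧ S ω = 1 ∧ X ω = x}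
          = pr P {ω | S ω = 1 ∧ R ω = 0 ∧ X ω = x} :=
        pr_congr P _ _ fun ω => by simp only [Set.mem_setOf_eq]; tauto
      have g11 : pr P {ω | R ω = 1 ∧ S ω = 1 ∧ X ω = x}
          = pr P {ω | S ω = 1 ∧ R ω = 1 ∧ X ω = x} :=
        pr_congr P _ _ fun ω => by simp only [Set.mem_setOf_eq]; tauto
      rw [g00, g01] at q0
      rw [g10, g11] at q1
      have h00 := hig2 x hx 0 0
      have h01 := hig2 x hx 0 1
      have h10 := hig2 x hx 1 0
      have h11 := hig2 x hx 1 1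
      have m1 := hme1 x hx
      have m2 := hme2 x hx
      have hwx := hw x hx
      have hB00 : pr P {ω | S ω = 0 ∧ R ω = 0 ∧ X ω = x}
          = (1 - α) * pr P {ω | S ω = 0 ∧ X ω = x} := by linarith [q0, m1]
      have hB11 : pr P {ω | S ω = 1 ∧ R ω = 1 ∧ X ω = x}
          = (1 - β) * pr P {ω | S ω = 1 ∧ X ω = x} := by linarith [q1, m2]
      have hsl : ∀ a b : ℝ,
          surrogateLoss α β ℓ (f x) 0 * ((1 - α) * a + β * b)
            + surrogateLoss α β ℓ (f x) 1 * (α * a + (1 - β) * b)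
          = ℓ (f x) 0 * a + ℓ (f x) 1 * b := by
        intro a b
        simp only [surrogateLoss]
        norm_num
        field_simp
        ring
      set pT := pr P {ω | T ω = τ}
      set px := pr P {ω | X ω = x}
      set ptx := pr P {ω | T ω = τ ∧ X ω = x}
      set A00 := pr P {ω | S ω = 0 ∧ R ω = 0 ∧ X ω = x ∧ T ω = τ}
      set A01 := pr P {ω | S ω = 0 ∧ R ω = 1 ∧ X ω = x ∧ T ω = τ}
      set A10 := pr P {ω | S ω = 1 ∧ R ω = 0 ∧ X ω = x ∧ T ω = τ}
      set A11 := pr P {ω | S ω = 1 ∧ R ω = 1 ∧ X ω = x ∧ T ω = τ}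
      set B00 := pr P {ω | S ω = 0 ∧ R ω = 0 ∧ X ω = x}
      set B01 := pr P {ω | S ω = 0 ∧ R ω = 1 ∧ X ω = x}
      set B10 := pr P {ω | S ω = 1 ∧ R ω = 0 ∧ X ω = x}
      set B11 := pr P {ω | S ω = 1 ∧ R ω = 1 ∧ X ω = x}
      set Q0 := pr P {ω | S ω = 0 ∧ X ω = x}
      set Q1 := pr P {ω | S ω = 1 ∧ X ω = x}
      set C0 := pr P {ω | R ω = 0 ∧ X ω = x ∧ T ω = τ}
      set C1 := pr P {ω | R ω = 1 ∧ X ω = x ∧ T ω = τ}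
      set sl0 := surrogateLoss α β ℓ (f x) 0
      set sl1 := surrogateLoss α β ℓ (f x) 1
      refine mul_right_cancel₀ hpxne ?_
      linear_combination (w x * sl0 * px) * c0 + (w x * sl1 * px) * c1
        + (w x * sl0) * h00 + (w x * sl0) * h10 + (w x * sl1) * h01 + (w x * sl1) * h11
        + (sl0 * (B00 + B10) + sl1 * (B01 + B11)) * hwx
        + pT * px * (hsl Q0 Q1)
        + pT * px * sl0 * hB00 + pT * px * sl0 * m2
        + pT * px * sl1 * m1 + pT * px * sl1 * hB11
    · have hx0' : pr P {ω | X ω = x} = 0 :=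
        le_antisymm (not_lt.mp hx) (pr_nonneg P hP0 _)
      have hz : ∀ ω, X ω = x → P ω = 0 := fun ω hω =>
        pr_eq_zero_imp P hP0 hx0' ω hω
      have z1 : (∑ ω, if X ω = x ∧ T ω = τ then
          P ω * (w x * surrogateLoss α β ℓ (f x) (R ω)) else 0) = 0 :=
        Finset.sum_eq_zero fun ω _ => by
          by_cases h : X ω = x ∧ T ω = τ
          · simp [h, hz ω h.1]
          · simp [h]
      have z2 : (∑ ω, if X ω = x then P ω * ℓ (f x) (S ω) else 0) = 0 :=
        Finset.sum_eq_zero fun ω _ => by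
          by_cases h : X ω = x
          · simp [h, hz ω h]
          · simp [h]
      rw [z1, z2, mul_zero]
  unfold cex ex
  beta_reduce
  have eR : (∑ ω, P ω * ℓ (f (X ω)) (S ω))
      = ∑ x : 𝒳, ∑ ω, if X ω = x then P ω * ℓ (f x) (S ω) else 0 := by
    rw [Finset.sum_comm]
    refine Finset.sum_congr rfl fun ω _ => ?_
    rw [Finset.sum_ite_eq]
    simp
  have hnum : (∑ ω, @ite ℝ (ω ∈ {ω' | T ω' = τ}) (Classical.propDecidable _)
        (P ω * (w (X ω) * surrogateLoss α β ℓ (f (X ω)) (R ω))) 0)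
      = ∑ x : 𝒳, ∑ ω, if X ω = x ∧ T ω = τ then
          P ω * (w x * surrogateLoss α β ℓ (f x) (R ω)) else 0 := by
    rw [Finset.sum_comm]
    refine Finset.sum_congr rfl fun ω _ => ?_
    by_cases hT : T ω = τ
    · rw [if_pos (show ω ∈ {ω' | T ω' = τ} from hT)]
      simp only [hT, and_true]
      rw [Finset.sum_ite_eq]
      simp
    · rw [if_neg (show ω ∉ {ω' | T ω' = τ} from hT)]
      exact (Finset.sum_eq_zero fun x _ => by simp [hT]).symm
  rw [hnum, Finset.sum_congr rfl fun x _ => keyx x, ← Finset.mul_sum, ← eR]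
  exact mul_div_cancel_left₀ _ (ne_of_gt hpT)
end
/-- Under consistency, ignorability, positivity and the treatment-conditional
measurement error model, the re-weighted surrogate risk over observed proxies equals the risk
over target potential outcomes: `E[w(X)·ℓ̃(f(X), Y) | T = t] = E[ℓ(f(X), Y*_t)]`. -/
theorem reweighted_surrogate_risk_unbiased
    {Ω 𝒳 : Type*} [Fintype Ω] [Fintype 𝒳] [Nonempty 𝒳]
    (P : Ω → ℝ) (hP0 : ∀ ω, 0 ≤ P ω) (hP1 : ∑ ω : Ω, P ω = 1)
    (X : Ω → 𝒳) (T : Ω → Fin 2)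
    -- target potential outcomes `Ys t` and proxy potential outcomes `Yp t`, `t ∈ {0,1}`
    (Ys Yp : Fin 2 → Ω → Fin 2)
    -- consistency: the observed proxy outcome
    (Y : Ω → Fin 2) (hcons : ∀ ω, Y ω = Yp (T ω) ω)
    -- ignorability: `(Y*₀, Y*₁, Y₀, Y₁) ⟂ T | X = x`
    (hig : ∀ x : 𝒳, 0 < pr P {ω | X ω = x} →
      ∀ a b c d t : Fin 2,
        cpr P ({ω | Ys 0 ω = a ∧ Ys 1 ω = b ∧ Yp 0 ω = c ∧ Yp 1 ω = d} ∩ {ω | T ω = t})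
            {ω | X ω = x}
          = cpr P {ω | Ys 0 ω = a ∧ Ys 1 ω = b ∧ Yp 0 ω = c ∧ Yp 1 ω = d} {ω | X ω = x}
            * cpr P {ω | T ω = t} {ω | X ω = x})
    -- positivity
    (hpos : ∀ x : 𝒳, 0 < pr P {ω | X ω = x} →
      0 < cpr P {ω | T ω = 1} {ω | X ω = x} ∧ cpr P {ω | T ω = 1} {ω | X ω = x} < 1)
    -- treatment-conditional measurement error model
    (α β : Fin 2 → ℝ)
    (hα : ∀ t, α t ∈ Set.Ico (0:ℝ) 1) (hβ : ∀ t, β t ∈ Set.Ico (0:ℝ) 1)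
    (hαβ : ∀ t, α t + β t < 1)
    (hme : ∀ (t : Fin 2) (x : 𝒳), 0 < pr P {ω | X ω = x} →
      (0 < pr P {ω | Ys t ω = 0 ∧ X ω = x} →
        cpr P {ω | Yp t ω = 1} {ω | Ys t ω = 0 ∧ X ω = x} = α t) ∧
      (0 < pr P {ω | Ys t ω = 1 ∧ X ω = x} →
        cpr P {ω | Yp t ω = 0} {ω | Ys t ω = 1 ∧ X ω = x} = β t))
    -- target intervention, loss, predictor
    (t : Fin 2) (ℓ : Set.Icc (0:ℝ) 1 → Fin 2 → ℝ) (f : 𝒳 → Set.Icc (0:ℝ) 1)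
    -- weighting function `w(x) = P(T = t) / P(T = t | X = x)`
    (w : 𝒳 → ℝ)
    (hw : ∀ x : 𝒳, 0 < pr P {ω | X ω = x} →
      w x = pr P {ω | T ω = t} / cpr P {ω | T ω = t} {ω | X ω = x}) :
    cex P (fun ω => w (X ω) * surrogateLoss (α t) (β t) ℓ (f (X ω)) (Y ω)) {ω | T ω = t}
      = ex P (fun ω => ℓ (f (X ω)) (Ys t ω)) := by
  have eTX : ∀ (τ' : Fin 2) (x : 𝒳),
      pr P ({ω | T ω = τ'} ∩ {ω | X ω = x}) = pr P {ω | T ω = τ' ∧ X ω = x} :=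
    fun τ' x => pr_congr P _ _ fun ω => Iff.rfl
  -- consistency
  have hcex : cex P (fun ω => w (X ω) * surrogateLoss (α t) (β t) ℓ (f (X ω)) (Y ω)) {ω | T ω = t}
      = cex P (fun ω => w (X ω) * surrogateLoss (α t) (β t) ℓ (f (X ω)) (Yp t ω)) {ω | T ω = t} := by
    unfold cex
    congr 1
    refine Finset.sum_congr rfl fun ω _ => ?_
    beta_reduce
    by_cases hB : ω ∈ {ω | T ω = t}
    · rw [if_pos hB, if_pos hB, hcons ω, show T ω = t from hB]
    · rw [if_neg hB, if_neg hB]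
  -- positivity in joint form
  have hposj : ∀ x : 𝒳, 0 < pr P {ω | X ω = x} → 0 < pr P {ω | T ω = t ∧ X ω = x} := by
    intro x hx
    obtain ⟨h1, h2⟩ := hpos x hx
    unfold cpr at h1 h2
    rw [eTX 1 x] at h1 h2
    have hsplitT := pr_split P T (fun ω => X ω = x)
    have e1 : 0 < pr P {ω | T ω = 1 ∧ X ω = x} := by
      rcases (div_pos_iff).mp h1 with ⟨hn, -⟩ | ⟨-, hd⟩
      · exact hn
      · linarith
    have e2 : pr P {ω | T ω = 1 ∧ X ω = x} < pr P {ω | X ω = x} := (div_lt_one hx).mp h2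
    rcases fin2_cases t with ht | ht <;> subst ht
    · linarith
    · exact e1
  -- weighting in joint form
  have hwd : ∀ x : 𝒳, 0 < pr P {ω | X ω = x} →
      w x * pr P {ω | T ω = t ∧ X ω = x}
        = pr P {ω | T ω = t} * pr P {ω | X ω = x} := by
    intro x hx
    have h := hw x hx
    unfold cpr at h
    rw [eTX t x] at h
    have hptx := hposj x hx
    rw [h]
    field_simp
  -- measurement error in joint form
  have hme1d : ∀ x : 𝒳, 0 < pr P {ω | X ω = x} →
      pr P {ω | Ys t ω = 0 ∧ Yp t ω = 1 ∧ X ω = x}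
        = α t * pr P {ω | Ys t ω = 0 ∧ X ω = x} := by
    intro x hx
    by_cases hq : 0 < pr P {ω | Ys t ω = 0 ∧ X ω = x}
    · have h := (hme t x hx).1 hq
      unfold cpr at h
      rw [pr_congr P ({ω | Yp t ω = 1} ∩ {ω | Ys t ω = 0 ∧ X ω = x})
          {ω | Ys t ω = 0 ∧ Yp t ω = 1 ∧ X ω = x}
          (fun ω => by simp only [Set.mem_inter_iff, Set.mem_setOf_eq]; tauto)] at h
      rw [div_eq_iff (ne_of_gt hq)] at h
      exact h
    · have hq0 : pr P {ω | Ys t ω = 0 ∧ X ω = x} = 0 :=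
        le_antisymm (not_lt.mp hq) (pr_nonneg P hP0 _)
      have hz : pr P {ω | Ys t ω = 0 ∧ Yp t ω = 1 ∧ X ω = x} = 0 :=
        le_antisymm (hq0 ▸ pr_mono P hP0 (fun ω h => ⟨h.1, h.2.2⟩)) (pr_nonneg P hP0 _)
      rw [hz, hq0, mul_zero]
  have hme2d : ∀ x : 𝒳, 0 < pr P {ω | X ω = x} →
      pr P {ω | Ys t ω = 1 ∧ Yp t ω = 0 ∧ X ω = x}
        = β t * pr P {ω | Ys t ω = 1 ∧ X ω = x} := by
    intro x hx
    by_cases hq : 0 < pr P {ω | Ys t ω = 1 ∧ X ω = x}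
    · have h := (hme t x hx).2 hq
      unfold cpr at h
      rw [pr_congr P ({ω | Yp t ω = 0} ∩ {ω | Ys t ω = 1 ∧ X ω = x})
          {ω | Ys t ω = 1 ∧ Yp t ω = 0 ∧ X ω = x}
          (fun ω => by simp only [Set.mem_inter_iff, Set.mem_setOf_eq]; tauto)] at h
      rw [div_eq_iff (ne_of_gt hq)] at h
      exact h
    · have hq0 : pr P {ω | Ys t ω = 1 ∧ X ω = x} = 0 :=
        le_antisymm (not_lt.mp hq) (pr_nonneg P hP0 _)
      have hz : pr P {ω | Ys t ω = 1 ∧ Yp t ω = 0 ∧ X ω = x} = 0 :=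
        le_antisymm (hq0 ▸ pr_mono P hP0 (fun ω h => ⟨h.1, h.2.2⟩)) (pr_nonneg P hP0 _)
      rw [hz, hq0, mul_zero]
  -- ignorability in joint form
  have hig2d : ∀ x : 𝒳, 0 < pr P {ω | X ω = x} → ∀ u v : Fin 2,
      pr P {ω | Ys t ω = u ∧ Yp t ω = v ∧ X ω = x ∧ T ω = t} * pr P {ω | X ω = x}
        = pr P {ω | Ys t ω = u ∧ Yp t ω = v ∧ X ω = x}
          * pr P {ω | T ω = t ∧ X ω = x} := by
    intro x hx u v
    have hpxne : pr P {ω | X ω = x} ≠ 0 := ne_of_gt hx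
    have key0 : ∀ a b c d : Fin 2,
        pr P {ω | Ys 1 ω = b ∧ Yp 1 ω = d ∧ Ys 0 ω = a ∧ Yp 0 ω = c ∧ X ω = x ∧ T ω = t}
            * pr P {ω | X ω = x}
          = pr P {ω | Ys 1 ω = b ∧ Yp 1 ω = d ∧ Ys 0 ω = a ∧ Yp 0 ω = c ∧ X ω = x}
            * pr P {ω | T ω = t ∧ X ω = x} := by
      intro a b c d
      have h := hig x hx a b c d t
      unfold cpr at h
      rw [pr_congr P (({ω | Ys 0 ω = a ∧ Ys 1 ω = b ∧ Yp 0 ω = c ∧ Yp 1 ω = d}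
            ∩ {ω | T ω = t}) ∩ {ω | X ω = x})
          {ω | Ys 1 ω = b ∧ Yp 1 ω = d ∧ Ys 0 ω = a ∧ Yp 0 ω = c ∧ X ω = x ∧ T ω = t}
          (fun ω => by simp only [Set.mem_inter_iff, Set.mem_setOf_eq]; tauto),
        pr_congr P ({ω | Ys 0 ω = a ∧ Ys 1 ω = b ∧ Yp 0 ω = c ∧ Yp 1 ω = d} ∩ {ω | X ω = x})
          {ω | Ys 1 ω = b ∧ Yp 1 ω = d ∧ Ys 0 ω = a ∧ Yp 0 ω = c ∧ X ω = x}
          (fun ω => by simp only [Set.mem_inter_iff, Set.mem_setOf_eq]; tauto),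
        eTX t x] at h
      field_simp at h
      refine mul_right_cancel₀ hpxne ?_
      linear_combination pr P {ω | X ω = x} * h
    have key1 : ∀ a b c d : Fin 2,
        pr P {ω | Ys 0 ω = a ∧ Yp 0 ω = c ∧ Ys 1 ω = b ∧ Yp 1 ω = d ∧ X ω = x ∧ T ω = t}
            * pr P {ω | X ω = x}
          = pr P {ω | Ys 0 ω = a ∧ Yp 0 ω = c ∧ Ys 1 ω = b ∧ Yp 1 ω = d ∧ X ω = x}
            * pr P {ω | T ω = t ∧ X ω = x} := by
      intro a b c d
      have h := hig x hx a b c d t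
      unfold cpr at h
      rw [pr_congr P (({ω | Ys 0 ω = a ∧ Ys 1 ω = b ∧ Yp 0 ω = c ∧ Yp 1 ω = d}
            ∩ {ω | T ω = t}) ∩ {ω | X ω = x})
          {ω | Ys 0 ω = a ∧ Yp 0 ω = c ∧ Ys 1 ω = b ∧ Yp 1 ω = d ∧ X ω = x ∧ T ω = t}
          (fun ω => by simp only [Set.mem_inter_iff, Set.mem_setOf_eq]; tauto),
        pr_congr P ({ω | Ys 0 ω = a ∧ Ys 1 ω = b ∧ Yp 0 ω = c ∧ Yp 1 ω = d} ∩ {ω | X ω = x})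
          {ω | Ys 0 ω = a ∧ Yp 0 ω = c ∧ Ys 1 ω = b ∧ Yp 1 ω = d ∧ X ω = x}
          (fun ω => by simp only [Set.mem_inter_iff, Set.mem_setOf_eq]; tauto),
        eTX t x] at h
      field_simp at h
      refine mul_right_cancel₀ hpxne ?_
      linear_combination pr P {ω | X ω = x} * h
    rcases fin2_cases t with ht | ht <;> subst ht
    · have s1 := pr_split P (Yp 1) (fun ω => Ys 0 ω = u ∧ Yp 0 ω = v ∧ X ω = x ∧ T ω = 0)
      have s2 := pr_split P (Ys 1)
        (fun ω => Yp 1 ω = 0 ∧ Ys 0 ω = u ∧ Yp 0 ω = v ∧ X ω = x ∧ T ω = 0)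
      have s3 := pr_split P (Ys 1)
        (fun ω => Yp 1 ω = 1 ∧ Ys 0 ω = u ∧ Yp 0 ω = v ∧ X ω = x ∧ T ω = 0)
      have u1 := pr_split P (Yp 1) (fun ω => Ys 0 ω = u ∧ Yp 0 ω = v ∧ X ω = x)
      have u2 := pr_split P (Ys 1) (fun ω => Yp 1 ω = 0 ∧ Ys 0 ω = u ∧ Yp 0 ω = v ∧ X ω = x)
      have u3 := pr_split P (Ys 1) (fun ω => Yp 1 ω = 1 ∧ Ys 0 ω = u ∧ Yp 0 ω = v ∧ X ω = x)
      linear_combination pr P {ω | X ω = x} * s1 + pr P {ω | X ω = x} * s2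
        + pr P {ω | X ω = x} * s3
        - pr P {ω | T ω = 0 ∧ X ω = x} * u1 - pr P {ω | T ω = 0 ∧ X ω = x} * u2
        - pr P {ω | T ω = 0 ∧ X ω = x} * u3
        + key0 u 0 v 0 + key0 u 1 v 0 + key0 u 0 v 1 + key0 u 1 v 1
    · have s1 := pr_split P (Yp 0) (fun ω => Ys 1 ω = u ∧ Yp 1 ω = v ∧ X ω = x ∧ T ω = 1)
      have s2 := pr_split P (Ys 0)
        (fun ω => Yp 0 ω = 0 ∧ Ys 1 ω = u ∧ Yp 1 ω = v ∧ X ω = x ∧ T ω = 1)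
      have s3 := pr_split P (Ys 0)
        (fun ω => Yp 0 ω = 1 ∧ Ys 1 ω = u ∧ Yp 1 ω = v ∧ X ω = x ∧ T ω = 1)
      have u1 := pr_split P (Yp 0) (fun ω => Ys 1 ω = u ∧ Yp 1 ω = v ∧ X ω = x)
      have u2 := pr_split P (Ys 0) (fun ω => Yp 0 ω = 0 ∧ Ys 1 ω = u ∧ Yp 1 ω = v ∧ X ω = x)
      have u3 := pr_split P (Ys 0) (fun ω => Yp 0 ω = 1 ∧ Ys 1 ω = u ∧ Yp 1 ω = v ∧ X ω = x)
      linear_combination pr P {ω | X ω = x} * s1 + pr P {ω | X ω = x} * s2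
        + pr P {ω | X ω = x} * s3
        - pr P {ω | T ω = 1 ∧ X ω = x} * u1 - pr P {ω | T ω = 1 ∧ X ω = x} * u2
        - pr P {ω | T ω = 1 ∧ X ω = x} * u3
        + key1 0 u 0 v + key1 1 u 0 v + key1 0 u 1 v + key1 1 u 1 v
  rw [hcex]
  exact core P hP0 hP1 X T t (Ys t) (Yp t) (α t) (β t) (hαβ t)
    hig2d hme1d hme2d hposj ℓ f w hwd
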